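/- Let γ be a regular cardinal, λ = γ⁺, and let η̄ = ⟨η_δ : δ ∈ S⟩ be a tree-like ladder system on a stationary set S ⊆ λ of limit ordinals of cofinality γ. If η̄ has γ-uniformization and ◊_γ holds, then η̄ has strong γ-uniformization. -/

import Mathlib

open CategoryTheory Cardinal

noncomputable section

/-- `C` is a club (closed unbounded set) in `κ`. -/
def IsClubIn (C : Set Ordinal.{0}) (κ : Ordinal.{0}) : Prop :=
  C ⊆ Set.Iio κ ∧ (∀ α < κ, ∃ β ∈ C, α ≤ β) ∧
    (∀ s : Set Ordinal.{0}, s ⊆ C → s.Nonempty → sSup s < κ → sSup s ∈ C)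

/-- `S` is stationary in `κ`: it meets every club of `κ`. -/
def IsStationaryIn (S : Set Ordinal.{0}) (κ : Ordinal.{0}) : Prop :=
  ∀ C : Set Ordinal.{0}, IsClubIn C κ → (S ∩ C).Nonempty

/-- `S ⊆ κ` is non-reflecting: `S ∩ α` is not stationary in `α` for any
limit ordinal `α < κ`. -/
def IsNonReflecting (S : Set Ordinal.{0}) (κ : Ordinal.{0}) : Prop :=
  ∀ α < κ, Order.IsSuccLimit α → ¬ IsStationaryIn (S ∩ Set.Iio α) α

/-- The diamond principle `◊_S` for `S ⊆ κ`. -/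
def DiamondOn (S : Set Ordinal.{0}) (κ : Ordinal.{0}) : Prop :=
  ∃ A : Ordinal.{0} → Set Ordinal.{0}, (∀ α ∈ S, A α ⊆ Set.Iio α) ∧
    ∀ X : Set Ordinal.{0}, X ⊆ Set.Iio κ →
      IsStationaryIn {α | α ∈ S ∧ X ∩ Set.Iio α = A α} κ

/-- The diamond principle `◊_κ`. -/
def DiamondAt (κ : Ordinal.{0}) : Prop := DiamondOn (Set.Iio κ) κ

/-- A ladder system on `S`: for each `δ ∈ S`, `η δ : γ → δ` is strictly
increasing with range cofinal in `δ`. -/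
def IsLadderSystem (S : Set Ordinal.{0}) (γord : Ordinal.{0})
    (η : Ordinal.{0} → Ordinal.{0} → Ordinal.{0}) : Prop :=
  ∀ δ ∈ S, StrictMonoOn (η δ) (Set.Iio γord) ∧ (∀ i < γord, η δ i < δ) ∧
    ∀ β < δ, ∃ i < γord, β ≤ η δ i

/-- The ladder system is tree-like. -/
def IsTreeLike (S : Set Ordinal.{0}) (γord : Ordinal.{0})
    (η : Ordinal.{0} → Ordinal.{0} → Ordinal.{0}) : Prop :=
  ∀ δ ∈ S, ∀ ν ∈ S, ∀ α < γord, ∀ β < γord,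
    η δ α = η ν β → α = β ∧ ∀ ρ ≤ α, η δ ρ = η ν ρ

/-- `μ`-uniformization for the ladder system `η` on `S ⊆ λ`: every family of
colourings `c_δ : rg(η_δ) → μ` is uniformized by a single `Ψ : λ → μ` from
some point `Ψ* δ` on. Ordinals below `μ.ord` encode the colours. -/
def HasUniformization (S : Set Ordinal.{0}) (γord lamord : Ordinal.{0})
    (η : Ordinal.{0} → Ordinal.{0} → Ordinal.{0}) (μ : Cardinal.{0}) : Prop :=
  ∀ cc : Ordinal.{0} → Ordinal.{0} → Ordinal.{0},
    (∀ δ ∈ S, ∀ i < γord, cc δ (η δ i) < μ.ord) →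
    ∃ (Ψ : Ordinal.{0} → Ordinal.{0}) (Ψs : Ordinal.{0} → Ordinal.{0}),
      (∀ β < lamord, Ψ β < μ.ord) ∧ (∀ δ ∈ S, Ψs δ < γord) ∧
      ∀ δ ∈ S, ∀ α, Ψs δ ≤ α → α < γord → Ψ (η δ α) = cc δ (η δ α)

/-- `rg(η_δ ↾ i)`: the range of the ladder `f` below `i`. -/
def rgUpTo (f : Ordinal.{0} → Ordinal.{0}) (i : Ordinal.{0}) : Set Ordinal.{0} :=
  f '' Set.Iio i

/-- `g` is (the graph of) a function with domain `D` and values in `R`. -/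
def IsFunGraphOn (g : Set (Ordinal.{0} × Ordinal.{0})) (D R : Set Ordinal.{0}) : Prop :=
  (∀ p ∈ g, p.1 ∈ D ∧ p.2 ∈ R) ∧ ∀ x ∈ D, ∃! y : Ordinal.{0}, (x, y) ∈ g

/-- The restriction of a graph to the domain `D`. -/
def graphRestrict (g : Set (Ordinal.{0} × Ordinal.{0})) (D : Set Ordinal.{0}) :
    Set (Ordinal.{0} × Ordinal.{0}) :=
  {p ∈ g | p.1 ∈ D}

/-- The graph of a total function `F` restricted to the domain `D`. -/
def graphOf (F : Ordinal.{0} → Ordinal.{0}) (D : Set Ordinal.{0}) :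
    Set (Ordinal.{0} × Ordinal.{0}) :=
  {p | p.1 ∈ D ∧ p.2 = F p.1}

/-- Strong `κ`-uniformization for the ladder system `η` on `S ⊆ λ = κ⁺`:
for every system `P̄ = ⟨P_α : α < λ⟩` with (i) `P_δ` a nonempty set of
functions `rg(η_δ) → δ ∩ κ` for `δ ∈ S`; (ii) `P_{η_δ(i)}` the set of
restrictions to `rg(η_δ↾(i+1))` of members of `P_δ`; (iii) at limits `i < γ`
every increasing sequence through the `P_{η_δ(j)}` has an extension in
`P_{η_δ(i)}` — there is a single `f : λ → κ` with `f↾rg(η_δ) ∈ P_δ` for all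
`δ ∈ S`. Partial functions are encoded by their graphs. -/
def HasStrongUniformization (S : Set Ordinal.{0}) (γord lamord κord : Ordinal.{0})
    (η : Ordinal.{0} → Ordinal.{0} → Ordinal.{0}) : Prop :=
  ∀ P : Ordinal.{0} → Set (Set (Ordinal.{0} × Ordinal.{0})),
    (∀ δ ∈ S, (P δ).Nonempty ∧
      ∀ f ∈ P δ, IsFunGraphOn f (rgUpTo (η δ) γord) (Set.Iio δ ∩ Set.Iio κord)) →
    (∀ δ ∈ S, ∀ i < γord,
      P (η δ i) = {g | ∃ f ∈ P δ, g = graphRestrict f (rgUpTo (η δ) (i + 1))}) →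
    (∀ δ ∈ S, ∀ i < γord, Order.IsSuccLimit i →
      ∀ fs : Ordinal.{0} → Set (Ordinal.{0} × Ordinal.{0}),
        (∀ j < i, fs j ∈ P (η δ j)) →
        (∀ j j' : Ordinal.{0}, j ≤ j' → j' < i → fs j ⊆ fs j') →
        ∃ g ∈ P (η δ i), (⋃ j ∈ Set.Iio i, fs j) ⊆ g) →
    ∃ F : Ordinal.{0} → Ordinal.{0}, (∀ β < lamord, F β < κord) ∧
      ∀ δ ∈ S, graphOf F (rgUpTo (η δ) γord) ∈ P δ

namespace StrongUnifAux

lemma lt_add_one_ord (a : Ordinal.{0}) : a < a + 1 := by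
  rw [Ordinal.add_one_eq_succ]; exact Order.lt_succ _

lemma lt_add_one_iff_ord {a b : Ordinal.{0}} : a < b + 1 ↔ a ≤ b := by
  rw [Ordinal.add_one_eq_succ]; exact Order.lt_succ_iff

lemma bddAbove_of_subset_Iio {s : Set Ordinal.{0}} {κ : Ordinal.{0}} (h : s ⊆ Set.Iio κ) :
    BddAbove s := ⟨κ, fun x hx => (h hx).le⟩

/-- The club of points above `θ` closed under a binary ordinal function. -/
lemma isClubIn_closure (gam : Cardinal.{0}) (hgreg : gam.IsRegular)
    (hω : Cardinal.aleph0 < gam)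
    (g : Ordinal.{0} → Ordinal.{0} → Ordinal.{0})
    (hg : ∀ a < gam.ord, ∀ b < gam.ord, g a b < gam.ord)
    (θ : Ordinal.{0}) (hθ : θ < gam.ord) :
    IsClubIn {x | θ < x ∧ x < gam.ord ∧ ∀ a < x, ∀ b < x, g a b < x} gam.ord := by
  have hγlim : Order.IsSuccLimit gam.ord := Cardinal.isSuccLimit_ord hgreg.aleph0_le
  refine ⟨fun x hx => hx.2.1, ?_, ?_⟩
  · -- unbounded
    intro α hα
    classical
    set dec : (o : Ordinal.{0}) → o.ToType → Ordinal.{0} :=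
      fun o x => ((Ordinal.ToType.mk (o := o)).symm x).1 with hdec
    have hdec_lt : ∀ (o : Ordinal.{0}) (x : o.ToType), dec o x < o := by
      intro o x; exact ((Ordinal.ToType.mk (o := o)).symm x).2
    have hdec_surj : ∀ (o a : Ordinal.{0}), a < o → ∃ x, dec o x = a := by
      intro o a ha
      exact ⟨Ordinal.ToType.mk (o := o) ⟨a, ha⟩, by simp [hdec]⟩
    set step : Ordinal.{0} → Ordinal.{0} := fun x =>
      max (x + 1) (⨆ p : x.ToType × x.ToType, Order.succ (g (dec x p.1) (dec x p.2))) with hstep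
    have hstep_lt : ∀ x < gam.ord, step x < gam.ord := by
      intro x hx
      refine max_lt ?_ ?_
      · rw [Ordinal.add_one_eq_succ]; exact hγlim.succ_lt hx
      · apply Ordinal.iSup_lt_ord
        · rw [hgreg.cof_eq]
          have hmkp : #(x.ToType × x.ToType) = x.card * x.card := by
            simp [Cardinal.mk_prod, Cardinal.mk_toType]
          rw [hmkp]
          exact Cardinal.mul_lt_of_lt hgreg.aleph0_le
            (Cardinal.lt_ord.mp hx) (Cardinal.lt_ord.mp hx)
        · intro p
          exact hγlim.succ_lt (hg _ ((hdec_lt x p.1).trans hx) _ ((hdec_lt x p.2).trans hx))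
    have hstep_le : ∀ x, x + 1 ≤ step x := fun x => le_max_left _ _
    have hstep_cl : ∀ x, ∀ a < x, ∀ b < x, g a b < step x := by
      intro x a ha b hb
      obtain ⟨xa, hxa⟩ := hdec_surj x a ha
      obtain ⟨xb, hxb⟩ := hdec_surj x b hb
      have h1 : Order.succ (g a b) ≤ ⨆ p : x.ToType × x.ToType,
          Order.succ (g (dec x p.1) (dec x p.2)) := by
        have := Ordinal.le_iSup (fun p : x.ToType × x.ToType =>
          Order.succ (g (dec x p.1) (dec x p.2))) (xa, xb)
        simpa [hxa, hxb] using this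
      have h2 : Order.succ (g a b) ≤ step x := h1.trans (le_max_right _ _)
      exact (Order.lt_succ (g a b)).trans_le h2
    set u : ℕ → Ordinal.{0} := fun n => Nat.rec (max (α + 1) (θ + 1)) (fun _ ih => step ih) n
      with hu
    have hu0 : u 0 = max (α + 1) (θ + 1) := rfl
    have husucc : ∀ n, u (n + 1) = step (u n) := fun n => rfl
    have hu_lt : ∀ n, u n < gam.ord := by
      intro n
      induction n with
      | zero =>
        rw [hu0]
        refine max_lt ?_ ?_ <;> rw [Ordinal.add_one_eq_succ]
        · exact hγlim.succ_lt hα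
        · exact hγlim.succ_lt hθ
      | succ n ih => rw [husucc]; exact hstep_lt _ ih
    have hu_mono : ∀ n, u n < u (n + 1) := by
      intro n
      rw [husucc]
      exact lt_of_lt_of_le (lt_add_one_ord _) (hstep_le _)
    set β := ⨆ n, u n with hβ
    have hub : ∀ n, u n ≤ β := fun n => Ordinal.le_iSup u n
    have hβγ : β < gam.ord := by
      apply Ordinal.iSup_lt_ord
      · rw [hgreg.cof_eq, Cardinal.mk_nat]; exact hω
      · exact hu_lt
    have hltu : ∀ a < β, ∃ n, a < u n := by
      intro a ha
      by_contra hc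
      push_neg at hc
      exact absurd (Ordinal.iSup_le hc) (not_le.2 ha)
    refine ⟨β, ⟨?_, hβγ, ?_⟩, ?_⟩
    · exact lt_of_lt_of_le (lt_of_lt_of_le (lt_add_one_ord θ) (le_max_right _ _)) (hub 0)
    · intro a ha b hb
      obtain ⟨na, hna⟩ := hltu a ha
      obtain ⟨nb, hnb⟩ := hltu b hb
      have humono : Monotone u := monotone_nat_of_le_succ (fun n => (hu_mono n).le)
      have ha' : a < u (max na nb) := hna.trans_le (humono (le_max_left _ _))
      have hb' : b < u (max na nb) := hnb.trans_le (humono (le_max_right _ _))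
      have hcl := hstep_cl (u (max na nb)) a ha' b hb'
      rw [← husucc] at hcl
      exact lt_of_lt_of_le hcl (hub (max na nb + 1))
    · exact le_trans (le_trans (lt_add_one_ord α).le (le_max_left _ _)) (hub 0)
  · -- closed
    intro s hs hne hlt
    have hbdd : BddAbove s := bddAbove_of_subset_Iio (fun x hx => (hs hx).2.1)
    obtain ⟨e, he⟩ := hne
    refine ⟨lt_of_lt_of_le (hs he).1 (le_csSup hbdd he), hlt, ?_⟩
    intro a ha b hb
    obtain ⟨xa, hxa, hxa'⟩ := exists_lt_of_lt_csSup ⟨e, he⟩ ha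
    obtain ⟨xb, hxb, hxb'⟩ := exists_lt_of_lt_csSup ⟨e, he⟩ hb
    rcases le_total xa xb with h | h
    · exact lt_of_lt_of_le ((hs hxb).2.2 a (hxa'.trans_le h) b hxb') (le_csSup hbdd hxb)
    · exact lt_of_lt_of_le ((hs hxa).2.2 a hxa' b (hxb'.trans_le h)) (le_csSup hbdd hxa)

lemma no_diamond_omega : ¬ DiamondAt Ordinal.omega0 := by
  rintro ⟨A, hA1, hA2⟩
  classical
  set X : Set Ordinal.{0} := {b | b < Ordinal.omega0 ∧ b ∉ A (b + 1)} with hX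
  have hXsub : X ⊆ Set.Iio Ordinal.omega0 := fun x hx => hx.1
  have hC : IsClubIn {x | 0 < x ∧ x < Ordinal.omega0} Ordinal.omega0 := by
    refine ⟨fun x hx => hx.2, ?_, ?_⟩
    · intro α hα
      exact ⟨max α 1, ⟨lt_of_lt_of_le zero_lt_one (le_max_right _ _),
        max_lt hα Ordinal.one_lt_omega0⟩, le_max_left _ _⟩
    · intro s hs hne hlt
      obtain ⟨e, he⟩ := hne
      have hbdd : BddAbove s := bddAbove_of_subset_Iio (fun x hx => (hs hx).2)
      exact ⟨lt_of_lt_of_le (hs he).1 (le_csSup hbdd he), hlt⟩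
  obtain ⟨α, ⟨hαmem, hguess⟩, hα0, hαω⟩ := hA2 X hXsub _ hC
  obtain ⟨n, hn⟩ := Ordinal.lt_omega0.mp hαω
  have hnz : n ≠ 0 := by
    rintro rfl
    rw [hn] at hα0
    exact absurd hα0 (by simp)
  obtain ⟨m, rfl⟩ := Nat.exists_eq_succ_of_ne_zero hnz
  have hα : α = (m : Ordinal) + 1 := by rw [hn]; exact_mod_cast rfl
  subst hα
  have hβα : (m : Ordinal) < (m : Ordinal) + 1 := lt_add_one_ord _
  have hβω : (m : Ordinal) < Ordinal.omega0 := hβα.trans hαω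
  by_cases hb : (m : Ordinal) ∈ A ((m : Ordinal) + 1)
  · have hmem : (m : Ordinal) ∈ X ∩ Set.Iio ((m : Ordinal) + 1) := by rw [hguess]; exact hb
    exact hmem.1.2 hb
  · have hmem : (m : Ordinal) ∈ X ∩ Set.Iio ((m : Ordinal) + 1) := ⟨⟨hβω, hb⟩, hβα⟩
    rw [hguess] at hmem
    exact hb hmem

end StrongUnifAux

/-- If `γ` is regular, `λ = γ⁺`, `η̄` is a tree-like ladder system on a
stationary `S ⊆ λ` of limit ordinals of cofinality `γ` with
`γ`-uniformization, and `◊_γ` holds, then `η̄` has strong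
`γ`-uniformization. -/
theorem hasStrongUniformization_of_diamond (gam : Cardinal.{0})
    (hgreg : gam.IsRegular) (lam : Cardinal.{0}) (hlam : lam = Order.succ gam)
    (S : Set Ordinal.{0}) (hSsub : S ⊆ Set.Iio lam.ord)
    (hSstat : IsStationaryIn S lam.ord)
    (hSlim : ∀ δ ∈ S, Order.IsSuccLimit δ) (hScof : ∀ δ ∈ S, δ.cof = gam)
    (η : Ordinal.{0} → Ordinal.{0} → Ordinal.{0})
    (hη : IsLadderSystem S gam.ord η) (htl : IsTreeLike S gam.ord η)
    (hunif : HasUniformization S gam.ord lam.ord η gam)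
    (hdiam : DiamondAt gam.ord) :
    HasStrongUniformization S gam.ord lam.ord gam.ord η := by
  classical
  intro P hP1 hP2 hP3
  -- dispatch the countable case: ◊_ω is false
  by_cases hωcase : gam = Cardinal.aleph0
  · exfalso
    apply StrongUnifAux.no_diamond_omega
    rw [hωcase, Cardinal.ord_aleph0] at hdiam
    exact hdiam
  have hω : Cardinal.aleph0 < gam := lt_of_le_of_ne hgreg.aleph0_le (Ne.symm hωcase)
  have hγlim : Order.IsSuccLimit gam.ord := Cardinal.isSuccLimit_ord hgreg.aleph0_le
  have hγpos : (0 : Ordinal) < gam.ord := hγlim.pos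
  have hsucclt : ∀ {i : Ordinal.{0}}, i < gam.ord → i + 1 < gam.ord := by
    intro i hi
    rw [Ordinal.add_one_eq_succ]; exact hγlim.succ_lt hi
  obtain ⟨A, hA1, hA2⟩ := hdiam
  -- basic ladder facts
  have hmono : ∀ δ ∈ S, ∀ {k i : Ordinal.{0}}, k < i → i < gam.ord → η δ k < η δ i := by
    intro δ hδ k i hk hi
    exact (hη δ hδ).1 (Set.mem_Iio.mpr (hk.trans hi)) (Set.mem_Iio.mpr hi) hk
  have hηinj : ∀ δ ∈ S, ∀ {k i : Ordinal.{0}}, k < gam.ord → i < gam.ord →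
      η δ k = η δ i → k = i := by
    intro δ hδ k i hk hi he
    rcases lt_trichotomy k i with h | h | h
    · exact absurd he (ne_of_lt (hmono δ hδ h hi))
    · exact h
    · exact absurd he.symm (ne_of_lt (hmono δ hδ h hk))
  have T1 : ∀ δ ∈ S, ∀ ν ∈ S, ∀ {i i' : Ordinal.{0}}, i < gam.ord → i' < gam.ord →
      η δ i = η ν i' → i = i' ∧ ∀ k ≤ i, η δ k = η ν k := by
    intro δ hδ ν hν i i' hi hi' he
    exact htl δ hδ ν hν i hi i' hi' he
  -- a pairing function on ordinals below γ
  obtain ⟨pr, hprlt, hprinj⟩ : ∃ pr : Ordinal.{0} → Ordinal.{0} → Ordinal.{0},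
      (∀ a b, a < gam.ord → b < gam.ord → pr a b < gam.ord) ∧
      (∀ {a b a' b' : Ordinal.{0}}, a < gam.ord → b < gam.ord → a' < gam.ord →
        b' < gam.ord → pr a b = pr a' b' → a = a' ∧ b = b') := by
    have hmkIio : #(↥(Set.Iio gam.ord) × ↥(Set.Iio gam.ord)) = #(↥(Set.Iio gam.ord)) := by
      simp only [Cardinal.mk_prod, Ordinal.mk_Iio_ordinal, Cardinal.card_ord, Cardinal.lift_id]
      rw [← Cardinal.lift_mul, Cardinal.mul_eq_self hgreg.aleph0_le]
    obtain ⟨epr⟩ := Cardinal.eq.mp hmkIio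
    refine ⟨fun a b => if h : a < gam.ord ∧ b < gam.ord then (epr (⟨a, h.1⟩, ⟨b, h.2⟩)).1 else 0,
      ?_, ?_⟩
    · intro a b ha hb
      simp only [dif_pos (⟨ha, hb⟩ : a < gam.ord ∧ b < gam.ord)]
      exact (epr _).2
    · intro a b a' b' ha hb ha' hb' he
      simp only [dif_pos (⟨ha, hb⟩ : a < gam.ord ∧ b < gam.ord),
        dif_pos (⟨ha', hb'⟩ : a' < gam.ord ∧ b' < gam.ord)] at he
      have h2 := epr.injective (Subtype.ext he)
      exact ⟨congrArg (fun q => (q.1.1 : Ordinal)) h2, congrArg (fun q => (q.2.1 : Ordinal)) h2⟩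
  -- coding of bounded subsets of γ via the diamond sequence
  obtain ⟨Ecode, hEcode⟩ : ∃ Ecode : Set Ordinal.{0} → Ordinal.{0},
      ∀ X : Set Ordinal.{0}, X ⊆ Set.Iio gam.ord → (∃ b, b < gam.ord ∧ ∀ x ∈ X, x < b) →
        Ecode X < gam.ord ∧ A (Ecode X) = X := by
    have hEex : ∀ X : Set Ordinal.{0}, X ⊆ Set.Iio gam.ord →
        (∃ b, b < gam.ord ∧ ∀ x ∈ X, x < b) → ∃ α, α < gam.ord ∧ A α = X := by
      rintro X hXsub ⟨b, hb, hXb⟩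
      obtain ⟨α, hα1, hα2⟩ := hA2 X hXsub _
        (StrongUnifAux.isClubIn_closure gam hgreg hω (fun _ _ => 0)
          (fun _ _ _ _ => hγpos) b hb)
      refine ⟨α, hα1.1, ?_⟩
      rw [← hα1.2]
      exact Set.inter_eq_self_of_subset_left (fun x hx => (hXb x hx).trans hα2.1)
    refine ⟨fun X => if h : ∃ α, α < gam.ord ∧ A α = X then h.choose else 0, ?_⟩
    intro X hXsub hXbdd
    have h := hEex X hXsub hXbdd
    simp only [dif_pos h]
    exact ⟨h.choose_spec.1, h.choose_spec.2⟩
  -- value of a function-graph at a point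
  obtain ⟨fval, hfval_mem⟩ : ∃ fval : Set (Ordinal.{0} × Ordinal.{0}) → Ordinal.{0} → Ordinal.{0},
      ∀ f x, (∃ y, (x, y) ∈ f) → (x, fval f x) ∈ f := by
    refine ⟨fun f x => if h : ∃ y, (x, y) ∈ f then h.choose else 0, ?_⟩
    intro f x h
    simp only [dif_pos h]
    exact h.choose_spec
  have hfval_unique : ∀ {f : Set (Ordinal.{0} × Ordinal.{0})} {D R : Set Ordinal.{0}},
      IsFunGraphOn f D R → ∀ {x y}, x ∈ D → (x, y) ∈ f → y = fval f x := by
    intro f D R hf x y hx hxy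
    obtain ⟨z, hz, hzu⟩ := hf.2 x hx
    rw [hzu y hxy, hzu _ (hfval_mem f x ⟨y, hxy⟩)]
  -- function graph facts for members of the P's
  have hPg : ∀ δ ∈ S, ∀ f ∈ P δ,
      IsFunGraphOn f (rgUpTo (η δ) gam.ord) (Set.Iio δ ∩ Set.Iio gam.ord) :=
    fun δ hδ => (hP1 δ hδ).2
  have hrgsub : ∀ (δ : Ordinal.{0}) {i : Ordinal.{0}}, i < gam.ord →
      rgUpTo (η δ) (i + 1) ⊆ rgUpTo (η δ) gam.ord := by
    intro δ i hi
    exact Set.image_mono (Set.Iio_subset_Iio (hsucclt hi).le)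
  have hFGrestrict : ∀ {f : Set (Ordinal.{0} × Ordinal.{0})} {D R : Set Ordinal.{0}}
      (D' : Set Ordinal.{0}), IsFunGraphOn f D R → D' ⊆ D →
      IsFunGraphOn (graphRestrict f D') D' R := by
    intro f D R D' hf hsub
    constructor
    · rintro p ⟨hpf, hpD⟩
      exact ⟨hpD, (hf.1 p hpf).2⟩
    · intro x hx
      obtain ⟨y, hy, hyu⟩ := hf.2 x (hsub hx)
      exact ⟨y, ⟨hy, hx⟩, fun y' hy' => hyu y' hy'.1⟩
  have hPnode : ∀ δ ∈ S, ∀ i, i < gam.ord → ∀ g ∈ P (η δ i),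
      ∃ f ∈ P δ, g = graphRestrict f (rgUpTo (η δ) (i + 1)) := by
    intro δ hδ i hi g hg
    rw [hP2 δ hδ i hi] at hg
    exact hg
  have hPnode' : ∀ δ ∈ S, ∀ i, i < gam.ord → ∀ f ∈ P δ,
      graphRestrict f (rgUpTo (η δ) (i + 1)) ∈ P (η δ i) := by
    intro δ hδ i hi f hf
    rw [hP2 δ hδ i hi]
    exact ⟨f, hf, rfl⟩
  have hPnodeFG : ∀ δ ∈ S, ∀ i, i < gam.ord → ∀ g ∈ P (η δ i),
      IsFunGraphOn g (rgUpTo (η δ) (i + 1)) (Set.Iio δ ∩ Set.Iio gam.ord) := by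
    intro δ hδ i hi g hg
    obtain ⟨f, hf, rfl⟩ := hPnode δ hδ i hi g hg
    exact hFGrestrict _ (hPg δ hδ f hf) (hrgsub δ hi)
  have hvalPδ : ∀ δ ∈ S, ∀ f ∈ P δ, ∀ k, k < gam.ord →
      fval f (η δ k) < gam.ord ∧ (η δ k, fval f (η δ k)) ∈ f := by
    intro δ hδ f hf k hk
    have hdom : η δ k ∈ rgUpTo (η δ) gam.ord := ⟨k, hk, rfl⟩
    have hmem := hfval_mem f (η δ k) ((hPg δ hδ f hf).2 _ hdom).exists
    exact ⟨((hPg δ hδ f hf).1 _ hmem).2.2, hmem⟩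
  -- decode for toType (used for boundedness of the coded objects)
  have hdecex : ∀ (o : Ordinal.{0}), ∃ dec : o.ToType → Ordinal.{0},
      (∀ x, dec x < o) ∧ ∀ a < o, ∃ x, dec x = a := by
    intro o
    refine ⟨fun x => ((Ordinal.ToType.mk (o := o)).symm x).1,
      fun x => ((Ordinal.ToType.mk (o := o)).symm x).2, fun a ha => ?_⟩
    exact ⟨Ordinal.ToType.mk (o := o) ⟨a, ha⟩, by simp⟩
  -- the guess-driven selectors
  set Dset : Ordinal.{0} → Ordinal.{0} → Set (Set (Ordinal.{0} × Ordinal.{0})) := fun δ j =>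
    {f | f ∈ P δ ∧ ∀ k < j, pr k (fval f (η δ k)) ∈ A j} with hDsetdef
  obtain ⟨msel, hmsel⟩ : ∃ msel : Ordinal.{0} → Ordinal.{0} → Set (Ordinal.{0} × Ordinal.{0}),
      ∀ δ j, (Dset δ j).Nonempty → msel δ j ∈ Dset δ j := by
    refine ⟨fun δ j => if h : (Dset δ j).Nonempty then h.choose else ∅, ?_⟩
    intro δ j h
    simp only [dif_pos h]
    exact h.choose_spec
  -- the coded objects
  set objf : Ordinal.{0} → Ordinal.{0} → Set Ordinal.{0} := fun δ i =>
    {c | ∃ j, j < i + 1 ∧ ∃ k, k < i + 1 ∧ (Dset δ j).Nonempty ∧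
        c = pr (pr j k) (fval (msel δ j) (η δ k))} with hobjdef
  have hmselP : ∀ δ ∈ S, ∀ j, (Dset δ j).Nonempty → msel δ j ∈ P δ := by
    intro δ hδ j h
    exact (hmsel δ j h).1
  have hobj_lt : ∀ δ ∈ S, ∀ i, i < gam.ord → ∀ c ∈ objf δ i, c < gam.ord := by
    rintro δ hδ i hi c ⟨j, hj, k, hk, hne, rfl⟩
    have hjγ : j < gam.ord := hj.trans (hsucclt hi)
    have hkγ : k < gam.ord := hk.trans (hsucclt hi)
    exact hprlt _ _ (hprlt _ _ hjγ hkγ)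
      (hvalPδ δ hδ _ (hmselP δ hδ j hne) k hkγ).1
  have hobj_bdd : ∀ δ ∈ S, ∀ i, i < gam.ord → ∃ b, b < gam.ord ∧ ∀ x ∈ objf δ i, x < b := by
    intro δ hδ i hi
    obtain ⟨dec, hdec_lt, hdec_surj⟩ := hdecex (i + 1)
    set bodyv : (i+1).ToType × (i+1).ToType → Ordinal.{0} := fun p =>
      pr (pr (dec p.1) (dec p.2)) (if _h : (Dset δ (dec p.1)).Nonempty then
        fval (msel δ (dec p.1)) (η δ (dec p.2)) else 0) + 1 with hbodyv
    set b := ⨆ p, bodyv p with hb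
    have hbγ : b < gam.ord := by
      apply Ordinal.iSup_lt_ord
      · rw [hgreg.cof_eq]
        have hmkp : #((i+1).ToType × (i+1).ToType) = (i+1).card * (i+1).card := by
          simp [Cardinal.mk_prod, Cardinal.mk_toType]
        rw [hmkp]
        exact Cardinal.mul_lt_of_lt hgreg.aleph0_le
          (Cardinal.lt_ord.mp (hsucclt hi)) (Cardinal.lt_ord.mp (hsucclt hi))
      · intro p
        apply hsucclt
        have h1γ : dec p.1 < gam.ord := (hdec_lt p.1).trans (hsucclt hi)
        have h2γ : dec p.2 < gam.ord := (hdec_lt p.2).trans (hsucclt hi)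
        by_cases hne : (Dset δ (dec p.1)).Nonempty
        · simp only [dif_pos hne]
          exact hprlt _ _ (hprlt _ _ h1γ h2γ) (hvalPδ δ hδ _ (hmselP δ hδ _ hne) _ h2γ).1
        · simp only [dif_neg hne]
          exact hprlt _ _ (hprlt _ _ h1γ h2γ) hγpos
    refine ⟨b, hbγ, ?_⟩
    rintro x ⟨j, hj, k, hk, hne, rfl⟩
    obtain ⟨p1, hp1⟩ := hdec_surj j hj
    obtain ⟨p2, hp2⟩ := hdec_surj k hk
    have hle : bodyv (p1, p2) ≤ b := Ordinal.le_iSup bodyv (p1, p2)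
    rw [hbodyv] at hle
    simp only [hp1, hp2, dif_pos hne] at hle
    exact lt_of_lt_of_le (StrongUnifAux.lt_add_one_ord _) hle
  have hobj_sub : ∀ δ ∈ S, ∀ i, i < gam.ord → objf δ i ⊆ Set.Iio gam.ord := by
    intro δ hδ i hi c hc
    exact hobj_lt δ hδ i hi c hc
  -- the colouring
  obtain ⟨cc, hcc_eq⟩ : ∃ cc : Ordinal.{0} → Ordinal.{0} → Ordinal.{0},
      ∀ δ ∈ S, ∀ i, i < gam.ord → cc δ (η δ i) = Ecode (objf δ i) := by
    refine ⟨fun δ β => if h : δ ∈ S ∧ ∃ i, i < gam.ord ∧ η δ i = β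
      then Ecode (objf δ h.2.choose) else 0, ?_⟩
    intro δ hδ i hi
    have h : δ ∈ S ∧ ∃ i', i' < gam.ord ∧ η δ i' = η δ i := ⟨hδ, i, hi, rfl⟩
    simp only [dif_pos h]
    have hspec := h.2.choose_spec
    have : h.2.choose = i := hηinj δ hδ hspec.1 hi hspec.2
    rw [this]
  have hccA : ∀ δ ∈ S, ∀ i, i < gam.ord → A (cc δ (η δ i)) = objf δ i := by
    intro δ hδ i hi
    rw [hcc_eq δ hδ i hi]
    exact (hEcode _ (hobj_sub δ hδ i hi) (hobj_bdd δ hδ i hi)).2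
  have hccb : ∀ δ ∈ S, ∀ i, i < gam.ord → cc δ (η δ i) < gam.ord := by
    intro δ hδ i hi
    rw [hcc_eq δ hδ i hi]
    exact (hEcode _ (hobj_sub δ hδ i hi) (hobj_bdd δ hδ i hi)).1
  obtain ⟨Ψ, Ψs, hΨlt, hΨs, hΨeq⟩ := hunif cc (fun δ hδ i hi => hccb δ hδ i hi)
  -- canonical node data
  obtain ⟨nd, nl, hnode⟩ : ∃ nd nl : Ordinal.{0} → Ordinal.{0}, ∀ δ ∈ S, ∀ i, i < gam.ord →
      nd (η δ i) ∈ S ∧ nl (η δ i) = i ∧ ∀ k ≤ i, η (nd (η δ i)) k = η δ k := by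
    refine ⟨fun β => if h : ∃ δ, δ ∈ S ∧ ∃ i, i < gam.ord ∧ η δ i = β then h.choose else 0,
      fun β => if h : ∃ δ, δ ∈ S ∧ ∃ i, i < gam.ord ∧ η δ i = β
        then h.choose_spec.2.choose else 0, ?_⟩
    intro δ hδ i hi
    have hN : ∃ δ', δ' ∈ S ∧ ∃ i', i' < gam.ord ∧ η δ' i' = η δ i := ⟨δ, hδ, i, hi, rfl⟩
    simp only [dif_pos hN]
    have hS' := hN.choose_spec.1
    have hi' := hN.choose_spec.2.choose_spec.1
    have heq := hN.choose_spec.2.choose_spec.2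
    obtain ⟨h1, h2⟩ := T1 _ hS' _ hδ hi' hi heq
    refine ⟨hS', h1, ?_⟩
    intro k hk
    exact h2 k (by rw [h1]; exact hk)
  obtain ⟨pick, hpick⟩ : ∃ pick : Set (Set (Ordinal.{0} × Ordinal.{0})) →
      Set (Ordinal.{0} × Ordinal.{0}), ∀ T, T.Nonempty → pick T ∈ T := by
    refine ⟨fun T => if h : T.Nonempty then h.choose else ∅, ?_⟩
    intro T h
    simp only [dif_pos h]
    exact h.choose_spec
  set Fm : Ordinal.{0} → (Ordinal.{0} → Ordinal.{0}) → Set (Ordinal.{0} × Ordinal.{0}) :=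
    fun β G => {p | p.1 ∈ η (nd β) '' Set.Iio (nl β + 1) ∧ p.1 ≠ β ∧ p.2 = G p.1} with hFmdef
  set Cmp : Ordinal.{0} → Ordinal.{0} → Set (Ordinal.{0} × Ordinal.{0}) := fun β j =>
    {p | ∃ k, k < nl β + 1 ∧ p.1 = η (nd β) k ∧ p.2 < gam.ord ∧ pr (pr j k) p.2 ∈ A (Ψ β)}
    with hCmpdef
  set F : Ordinal.{0} → Ordinal.{0} := WellFounded.fix Ordinal.lt_wf
    (fun β IH =>
      if _hn : ∃ δ, δ ∈ S ∧ ∃ i, i < gam.ord ∧ η δ i = β then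
        (if hv : {j | j < nl β + 1 ∧ Cmp β j ∈ P β ∧
            Fm β (fun x => if hx : x < β then IH x hx else 0) ⊆ Cmp β j}.Nonempty
         then fval (Cmp β (sInf {j | j < nl β + 1 ∧ Cmp β j ∈ P β ∧
            Fm β (fun x => if hx : x < β then IH x hx else 0) ⊆ Cmp β j})) β
         else fval (pick {gg | gg ∈ P β ∧
            Fm β (fun x => if hx : x < β then IH x hx else 0) ⊆ gg}) β)
      else 0) with hFdef
  have hFeq : ∀ β, F β =
      (fun (β : Ordinal.{0}) (IH : (x : Ordinal.{0}) → x < β → Ordinal.{0}) =>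
      if _hn : ∃ δ, δ ∈ S ∧ ∃ i, i < gam.ord ∧ η δ i = β then
        (if hv : {j | j < nl β + 1 ∧ Cmp β j ∈ P β ∧
            Fm β (fun x => if hx : x < β then IH x hx else 0) ⊆ Cmp β j}.Nonempty
         then fval (Cmp β (sInf {j | j < nl β + 1 ∧ Cmp β j ∈ P β ∧
            Fm β (fun x => if hx : x < β then IH x hx else 0) ⊆ Cmp β j})) β
         else fval (pick {gg | gg ∈ P β ∧
            Fm β (fun x => if hx : x < β then IH x hx else 0) ⊆ gg}) β)
      else 0) β (fun x _ => F x) := by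
    intro β
    rw [hFdef]
    exact WellFounded.fix_eq _ _ _
  have hFnon : ∀ β, (¬ ∃ δ, δ ∈ S ∧ ∃ i, i < gam.ord ∧ η δ i = β) → F β = 0 := by
    intro β hn
    have h := hFeq β
    simp only [] at h
    rw [dif_neg hn] at h
    exact h
  -- explicit versions of the node data
  set CmpE : Ordinal.{0} → Ordinal.{0} → Ordinal.{0} → Set (Ordinal.{0} × Ordinal.{0}) :=
    fun δ i j => {p | ∃ k, k < i + 1 ∧ p.1 = η δ k ∧ p.2 < gam.ord ∧
      pr (pr j k) p.2 ∈ A (Ψ (η δ i))} with hCmpEdef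
  set FmE : Ordinal.{0} → Ordinal.{0} → Set (Ordinal.{0} × Ordinal.{0}) := fun δ i =>
    {p | p.1 ∈ rgUpTo (η δ) (i + 1) ∧ p.1 ≠ η δ i ∧ p.2 = F p.1} with hFmEdef
  set VSE : Ordinal.{0} → Ordinal.{0} → Set Ordinal.{0} := fun δ i =>
    {j | j < i + 1 ∧ CmpE δ i j ∈ P (η δ i) ∧ FmE δ i ⊆ CmpE δ i j} with hVSEdef
  have hCmpE : ∀ δ ∈ S, ∀ i, i < gam.ord → ∀ j, Cmp (η δ i) j = CmpE δ i j := by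
    intro δ hδ i hi j
    obtain ⟨-, hnl, hagree⟩ := hnode δ hδ i hi
    ext p
    simp only [hCmpdef, hCmpEdef, Set.mem_setOf_eq, hnl]
    constructor
    · rintro ⟨k, hk, hp1, hp2, hpr⟩
      exact ⟨k, hk, by rw [hp1, hagree k (StrongUnifAux.lt_add_one_iff_ord.mp hk)], hp2, hpr⟩
    · rintro ⟨k, hk, hp1, hp2, hpr⟩
      exact ⟨k, hk, by rw [hp1, ← hagree k (StrongUnifAux.lt_add_one_iff_ord.mp hk)], hp2, hpr⟩
  have hFmE_elts : ∀ δ ∈ S, ∀ i, i < gam.ord → ∀ p : Ordinal.{0} × Ordinal.{0},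
      p ∈ FmE δ i ↔ ∃ k, k < i ∧ p.1 = η δ k ∧ p.2 = F p.1 := by
    intro δ hδ i hi p
    simp only [hFmEdef, Set.mem_setOf_eq, rgUpTo, Set.mem_image, Set.mem_Iio]
    constructor
    · rintro ⟨⟨k, hk, hp1⟩, hne, hp2⟩
      have hk' : k < i := by
        rcases lt_or_eq_of_le (StrongUnifAux.lt_add_one_iff_ord.mp hk) with h | h
        · exact h
        · exact absurd (by rw [← hp1, h]) hne
      exact ⟨k, hk', hp1.symm, hp2⟩
    · rintro ⟨k, hk, hp1, hp2⟩
      refine ⟨⟨k, hk.trans (StrongUnifAux.lt_add_one_ord i), hp1.symm⟩, ?_, hp2⟩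
      rw [hp1]
      exact ne_of_lt (hmono δ hδ hk hi)
  have hFmG : ∀ δ ∈ S, ∀ i, i < gam.ord →
      Fm (η δ i) (fun x => if hx : x < η δ i then F x else 0) = FmE δ i := by
    intro δ hδ i hi
    obtain ⟨-, hnl, hagree⟩ := hnode δ hδ i hi
    have hdomeq : η (nd (η δ i)) '' Set.Iio (nl (η δ i) + 1) = rgUpTo (η δ) (i + 1) := by
      ext x
      simp only [Set.mem_image, Set.mem_Iio, hnl, rgUpTo]
      constructor
      · rintro ⟨k, hk, rfl⟩
        exact ⟨k, hk, (hagree k (StrongUnifAux.lt_add_one_iff_ord.mp hk)).symm⟩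
      · rintro ⟨k, hk, rfl⟩
        exact ⟨k, hk, hagree k (StrongUnifAux.lt_add_one_iff_ord.mp hk)⟩
    ext p
    simp only [hFmdef, hFmEdef, Set.mem_setOf_eq, hdomeq]
    constructor
    · rintro ⟨hp1, hne, hp2⟩
      have hplt : p.1 < η δ i := by
        obtain ⟨k, hk, hp1'⟩ := hp1
        have hk' : k < i := by
          rcases lt_or_eq_of_le (StrongUnifAux.lt_add_one_iff_ord.mp (Set.mem_Iio.mp hk)) with h | h
          · exact h
          · exact absurd (by rw [← hp1', h]) hne
        rw [← hp1']
        exact hmono δ hδ hk' hi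
      rw [dif_pos hplt] at hp2
      exact ⟨hp1, hne, hp2⟩
    · rintro ⟨hp1, hne, hp2⟩
      have hplt : p.1 < η δ i := by
        obtain ⟨k, hk, hp1'⟩ := hp1
        have hk' : k < i := by
          rcases lt_or_eq_of_le (StrongUnifAux.lt_add_one_iff_ord.mp (Set.mem_Iio.mp hk)) with h | h
          · exact h
          · exact absurd (by rw [← hp1', h]) hne
        rw [← hp1']
        exact hmono δ hδ hk' hi
      exact ⟨hp1, hne, by rw [dif_pos hplt]; exact hp2⟩
  -- main unfolding lemma at nodes
  have UNF : ∀ δ ∈ S, ∀ i, i < gam.ord →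
      ((VSE δ i).Nonempty → F (η δ i) = fval (CmpE δ i (sInf (VSE δ i))) (η δ i)) ∧
      (¬ (VSE δ i).Nonempty →
        F (η δ i) = fval (pick {gg | gg ∈ P (η δ i) ∧ FmE δ i ⊆ gg}) (η δ i)) := by
    intro δ hδ i hi
    have h := hFeq (η δ i)
    simp only [] at h
    rw [dif_pos (⟨δ, hδ, i, hi, rfl⟩ : ∃ δ', δ' ∈ S ∧ ∃ i', i' < gam.ord ∧ η δ' i' = η δ i)] at h
    rw [hFmG δ hδ i hi] at h
    have hseteq : {j | j < nl (η δ i) + 1 ∧ Cmp (η δ i) j ∈ P (η δ i) ∧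
        FmE δ i ⊆ Cmp (η δ i) j} = VSE δ i := by
      ext j
      rw [Set.mem_setOf_eq, (hnode δ hδ i hi).2.1, hCmpE δ hδ i hi j]
      rfl
    rw [hseteq, hCmpE δ hδ i hi (sInf (VSE δ i))] at h
    constructor
    · intro hv
      rw [dif_pos hv] at h
      exact h
    · intro hv
      rw [dif_neg hv] at h
      exact h
  -- if the value at a node completes a member of `P`, the node graph is that member
  have hgraphofmem : ∀ δ ∈ S, ∀ i, i < gam.ord → ∀ gg ∈ P (η δ i), FmE δ i ⊆ gg →
      F (η δ i) = fval gg (η δ i) → graphOf F (rgUpTo (η δ) (i + 1)) = gg := by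
    intro δ hδ i hi gg hgg hsub hFv
    have hFG := hPnodeFG δ hδ i hi gg hgg
    have hβdom : η δ i ∈ rgUpTo (η δ) (i + 1) := ⟨i, StrongUnifAux.lt_add_one_ord i, rfl⟩
    ext p
    constructor
    · rintro ⟨hp1, hp2⟩
      by_cases hne : p.1 = η δ i
      · have hmem := hfval_mem gg (η δ i) ((hFG.2 _ hβdom).exists)
        have hpe : p = (η δ i, fval gg (η δ i)) := by
          rw [Prod.ext_iff]
          exact ⟨hne, by rw [hp2, hne, hFv]⟩
        rw [hpe]
        exact hmem
      · exact hsub ⟨hp1, hne, hp2⟩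
    · intro hp
      have hp1 := (hFG.1 p hp).1
      have hpmem : (p.1, p.2) ∈ gg := by rwa [Prod.mk.eta]
      refine ⟨hp1, ?_⟩
      by_cases hne : p.1 = η δ i
      · have h2 : p.2 = fval gg p.1 := hfval_unique hFG hp1 hpmem
        rw [h2, hne, ← hFv]
      · obtain ⟨k, hk, hp1'⟩ := hp1
        have hki : k < i := by
          rcases lt_or_eq_of_le (StrongUnifAux.lt_add_one_iff_ord.mp (Set.mem_Iio.mp hk)) with h | h
          · exact h
          · exact absurd (by rw [← hp1', h]) hne
        have hFmEmem : (p.1, F p.1) ∈ FmE δ i :=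
          (hFmE_elts δ hδ i hi _).mpr ⟨k, hki, hp1'.symm, rfl⟩
        have h1 : F p.1 = fval gg p.1 := hfval_unique hFG ⟨k, hk, hp1'⟩ (hsub hFmEmem)
        have h2 : p.2 = fval gg p.1 := hfval_unique hFG ⟨k, hk, hp1'⟩ hpmem
        rw [h2, h1]
  -- there is always a member of `P` extending the graph built so far
  have hEXT : ∀ δ ∈ S, ∀ i, i < gam.ord →
      (∀ k, k < i → graphOf F (rgUpTo (η δ) (k + 1)) ∈ P (η δ k)) →
      ∃ gg, gg ∈ P (η δ i) ∧ FmE δ i ⊆ gg := by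
    intro δ hδ i hi hIH
    rcases Ordinal.zero_or_succ_or_isSuccLimit i with hz | ⟨i0, hsu⟩ | hl
    · subst hz
      obtain ⟨f, hf⟩ := (hP1 δ hδ).1
      refine ⟨graphRestrict f (rgUpTo (η δ) (0 + 1)), hPnode' δ hδ 0 hi f hf, ?_⟩
      intro p hp
      obtain ⟨k, hk, -, -⟩ := (hFmE_elts δ hδ 0 hi p).mp hp
      exact absurd hk (by simp : ¬ k < 0)
    · have hsu' : i = i0 + 1 := by rw [← hsu, Ordinal.add_one_eq_succ]
      have hi0 : i0 < i := by rw [hsu']; exact StrongUnifAux.lt_add_one_ord i0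
      have hg0 := hIH i0 hi0
      obtain ⟨f, hf, hg0f⟩ := hPnode δ hδ i0 (hi0.trans hi) _ hg0
      refine ⟨graphRestrict f (rgUpTo (η δ) (i + 1)), hPnode' δ hδ i hi f hf, ?_⟩
      intro p hp
      obtain ⟨k, hk, hp1, hp2⟩ := (hFmE_elts δ hδ i hi p).mp hp
      have hki0 : k < i0 + 1 := by rw [← hsu']; exact hk
      have hpmem : p ∈ graphOf F (rgUpTo (η δ) (i0 + 1)) := by
        refine ⟨⟨k, hki0, hp1.symm⟩, hp2⟩
      rw [hg0f] at hpmem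
      exact ⟨hpmem.1, ⟨k, hk.trans (StrongUnifAux.lt_add_one_ord i), hp1.symm⟩⟩
    · set fs : Ordinal.{0} → Set (Ordinal.{0} × Ordinal.{0}) :=
        fun j => graphOf F (rgUpTo (η δ) (j + 1)) with hfs
      have hmono' : ∀ j j' : Ordinal.{0}, j ≤ j' → j' < i → fs j ⊆ fs j' := by
        intro j j' hjj hj' p hp
        exact ⟨Set.image_mono (Set.Iio_subset_Iio (by
          exact add_le_add_left hjj 1)) hp.1, hp.2⟩
      obtain ⟨g, hgP, hgsub⟩ := hP3 δ hδ i hi hl fs (fun j hj => hIH j hj) hmono'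
      refine ⟨g, hgP, ?_⟩
      intro p hp
      obtain ⟨k, hk, hp1, hp2⟩ := (hFmE_elts δ hδ i hi p).mp hp
      apply hgsub
      refine Set.mem_biUnion hk ?_
      exact ⟨⟨k, StrongUnifAux.lt_add_one_ord k, hp1.symm⟩, hp2⟩
  -- the invariant: each node graph is a member of `P`
  have INV : ∀ β, ∀ δ ∈ S, ∀ i, i < gam.ord → η δ i = β →
      graphOf F (rgUpTo (η δ) (i + 1)) ∈ P (η δ i) := by
    intro β
    induction β using Ordinal.induction with
    | _ β IH =>
    intro δ hδ i hi hβ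
    have hIH' : ∀ k, k < i → graphOf F (rgUpTo (η δ) (k + 1)) ∈ P (η δ k) := by
      intro k hk
      exact IH (η δ k) (by rw [← hβ]; exact hmono δ hδ hk hi) δ hδ k (hk.trans hi) rfl
    obtain ⟨gg0, hgg0P, hgg0sub⟩ := hEXT δ hδ i hi hIH'
    by_cases hv : (VSE δ i).Nonempty
    · have hval := (UNF δ hδ i hi).1 hv
      have hjm := csInf_mem hv
      rw [hgraphofmem δ hδ i hi _ hjm.2.1 hjm.2.2 hval]
      exact hjm.2.1
    · have hval := (UNF δ hδ i hi).2 hv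
      have hmem := hpick {gg | gg ∈ P (η δ i) ∧ FmE δ i ⊆ gg} ⟨gg0, hgg0P, hgg0sub⟩
      rw [hgraphofmem δ hδ i hi _ hmem.1 hmem.2 hval]
      exact hmem.1
  have hFlt : ∀ β, F β < gam.ord := by
    intro β
    by_cases hn : ∃ δ, δ ∈ S ∧ ∃ i, i < gam.ord ∧ η δ i = β
    · obtain ⟨δ, hδ, i, hi, hβ⟩ := hn
      have hmemP := INV β δ hδ i hi hβ
      have hFG := hPnodeFG δ hδ i hi _ hmemP
      have hβdom : η δ i ∈ rgUpTo (η δ) (i + 1) := ⟨i, StrongUnifAux.lt_add_one_ord i, rfl⟩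
      have hmem : (η δ i, F (η δ i)) ∈ graphOf F (rgUpTo (η δ) (i + 1)) := ⟨hβdom, rfl⟩
      have hr := (hFG.1 _ hmem).2
      rw [← hβ]
      exact hr.2
    · rw [hFnon β hn]
      exact hγpos
  refine ⟨F, fun β _ => hFlt β, ?_⟩
  intro ν hν
  -- reality along the ladder of ν, and its code
  set r : Ordinal.{0} → Ordinal.{0} := fun k => F (η ν k) with hrdef
  set X : Set Ordinal.{0} := {c | ∃ k, k < gam.ord ∧ c = pr k (r k)} with hXdef
  have hXsub : X ⊆ Set.Iio gam.ord := by
    rintro c ⟨k, hk, rfl⟩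
    exact hprlt _ _ hk (hFlt _)
  set θ := Ψs ν with hθdef
  have hθγ : θ < gam.ord := hΨs ν hν
  -- a good guessing point α₀
  obtain ⟨α₀, hα₀mem, hα₀C⟩ := hA2 X hXsub _
    (StrongUnifAux.isClubIn_closure gam hgreg hω (fun a b => max (r a) (pr a b))
      (fun a ha b hb => max_lt (hFlt _) (hprlt _ _ ha hb)) θ hθγ)
  obtain ⟨hα₀γ', hguess⟩ := hα₀mem
  obtain ⟨hθα₀, hα₀γ, hα₀cl⟩ := hα₀C
  have h0α₀ : (0 : Ordinal) < α₀ := lt_of_le_of_lt zero_le hθα₀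
  have hrcl : ∀ k, k < α₀ → r k < α₀ := fun k hk =>
    (le_max_left _ _).trans_lt (hα₀cl k hk 0 h0α₀)
  have hprcl : ∀ a, a < α₀ → ∀ b, b < α₀ → pr a b < α₀ := fun a ha b hb =>
    (le_max_right (r a) _).trans_lt (hα₀cl a ha b hb)
  -- `Dset ν α₀` is exactly the set of members matching reality below `α₀`
  have hKeyD : ∀ f, f ∈ Dset ν α₀ ↔ (f ∈ P ν ∧ ∀ k, k < α₀ → fval f (η ν k) = r k) := by
    intro f
    simp only [hDsetdef, Set.mem_setOf_eq]
    constructor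
    · rintro ⟨hfP, hfg⟩
      refine ⟨hfP, ?_⟩
      intro k hk
      have hin := hfg k hk
      rw [← hguess] at hin
      obtain ⟨⟨k', hk', hc⟩, -⟩ := hin
      have hkγ := hk.trans hα₀γ
      obtain ⟨h1, h2⟩ := hprinj hkγ (hvalPδ ν hν f hfP k hkγ).1 hk' (hFlt _) hc
      rw [h2, ← h1]
    · rintro ⟨hfP, hfr⟩
      refine ⟨hfP, ?_⟩
      intro k hk
      rw [← hguess]
      refine ⟨⟨k, hk.trans hα₀γ, by rw [hfr k hk]⟩, ?_⟩
      rw [hfr k hk]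
      exact hprcl k hk (r k) (hrcl k hk)
  have hDneα₀ : (Dset ν α₀).Nonempty := by
    have hmemP := INV (η ν α₀) ν hν α₀ hα₀γ rfl
    obtain ⟨f, hfP, hgf⟩ := hPnode ν hν α₀ hα₀γ _ hmemP
    refine ⟨f, (hKeyD f).mpr ⟨hfP, ?_⟩⟩
    intro k hk
    have hpmem : (η ν k, r k) ∈ graphOf F (rgUpTo (η ν) (α₀ + 1)) :=
      ⟨⟨k, hk.trans (StrongUnifAux.lt_add_one_ord α₀), rfl⟩, rfl⟩
    rw [hgf] at hpmem
    exact (hfval_unique (hPg ν hν f hfP) ⟨k, hk.trans hα₀γ, rfl⟩ hpmem.1).symm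
  -- decoding at levels past the uniformization threshold
  have hAΨ : ∀ i, θ ≤ i → i < gam.ord → A (Ψ (η ν i)) = objf ν i := by
    intro i hθi hi
    rw [hΨeq ν hν i hθi hi, hccA ν hν i hi]
  have hCmpRes : ∀ i, θ ≤ i → i < gam.ord → ∀ j, j < i + 1 → (Dset ν j).Nonempty →
      CmpE ν i j = graphRestrict (msel ν j) (rgUpTo (η ν) (i + 1)) := by
    intro i hθi hi j hj hne
    have hAeq := hAΨ i hθi hi
    have hjγ : j < gam.ord := hj.trans (hsucclt hi)
    have hmselFG := hPg ν hν _ (hmselP ν hν j hne)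
    ext p
    constructor
    · rintro ⟨k, hk, hp1, hp2, hpr⟩
      rw [hAeq] at hpr
      obtain ⟨j', hj', k', hk', hne', hc⟩ := hpr
      have hkγ : k < gam.ord := hk.trans (hsucclt hi)
      have hj'γ : j' < gam.ord := hj'.trans (hsucclt hi)
      have hk'γ : k' < gam.ord := hk'.trans (hsucclt hi)
      have hvγ : fval (msel ν j') (η ν k') < gam.ord :=
        (hvalPδ ν hν _ (hmselP ν hν j' hne') k' hk'γ).1
      obtain ⟨hpr1, hpr2⟩ := hprinj (hprlt _ _ hjγ hkγ) hp2 (hprlt _ _ hj'γ hk'γ) hvγ hc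
      obtain ⟨hj'', hk''⟩ := hprinj hjγ hkγ hj'γ hk'γ hpr1
      have hpe : p = (η ν k, fval (msel ν j) (η ν k)) :=
        Prod.ext hp1 (by rw [hpr2, hj'', hk''])
      constructor
      · rw [hpe]
        exact (hvalPδ ν hν _ (hmselP ν hν j hne) k hkγ).2
      · exact ⟨k, hk, hp1.symm⟩
    · rintro ⟨hpm, hp1r⟩
      obtain ⟨k, hk, hp1⟩ := hp1r
      have hkγ : k < gam.ord := hk.trans (hsucclt hi)
      have hpmem : (p.1, p.2) ∈ msel ν j := by rwa [Prod.mk.eta]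
      have hp2v : p.2 = fval (msel ν j) p.1 := hfval_unique hmselFG ⟨k, hkγ, hp1⟩ hpmem
      refine ⟨k, hk, hp1.symm, ?_, ?_⟩
      · rw [hp2v, ← hp1]
        exact (hvalPδ ν hν _ (hmselP ν hν j hne) k hkγ).1
      · rw [hAeq]
        exact ⟨j, hj, k, hk, hne, by rw [hp2v, ← hp1]⟩
  have hCmpEmpty : ∀ i, θ ≤ i → i < gam.ord → ∀ j, j < i + 1 → ¬ (Dset ν j).Nonempty →
      CmpE ν i j = ∅ := by
    intro i hθi hi j hj hne
    have hAeq := hAΨ i hθi hi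
    have hjγ : j < gam.ord := hj.trans (hsucclt hi)
    ext p
    simp only [Set.mem_empty_iff_false, iff_false]
    rintro ⟨k, hk, hp1, hp2, hpr⟩
    rw [hAeq] at hpr
    obtain ⟨j', hj', k', hk', hne', hc⟩ := hpr
    have hkγ : k < gam.ord := hk.trans (hsucclt hi)
    have hj'γ : j' < gam.ord := hj'.trans (hsucclt hi)
    have hk'γ : k' < gam.ord := hk'.trans (hsucclt hi)
    have hvγ : fval (msel ν j') (η ν k') < gam.ord :=
      (hvalPδ ν hν _ (hmselP ν hν j' hne') k' hk'γ).1
    obtain ⟨hpr1, -⟩ := hprinj (hprlt _ _ hjγ hkγ) hp2 (hprlt _ _ hj'γ hk'γ) hvγ hc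
    obtain ⟨hj'', -⟩ := hprinj hjγ hkγ hj'γ hk'γ hpr1
    rw [← hj''] at hne'
    exact hne hne'
  have hemptynotP : ∀ i, i < gam.ord → (∅ : Set (Ordinal.{0} × Ordinal.{0})) ∉ P (η ν i) := by
    intro i hi hmem
    have hFG := hPnodeFG ν hν i hi _ hmem
    obtain ⟨y, hy, -⟩ := hFG.2 (η ν i) ⟨i, StrongUnifAux.lt_add_one_ord i, rfl⟩
    exact hy
  set Vv : Ordinal.{0} → Set Ordinal.{0} := fun i =>
    {j | j < i + 1 ∧ (Dset ν j).Nonempty ∧ ∀ k, k < i → fval (msel ν j) (η ν k) = r k}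
    with hVvdef
  have hVSEVv : ∀ i, θ ≤ i → i < gam.ord → VSE ν i = Vv i := by
    intro i hθi hi
    ext j
    simp only [hVSEdef, hVvdef, Set.mem_setOf_eq]
    constructor
    · rintro ⟨hj, hPm, hsub⟩
      have hne : (Dset ν j).Nonempty := by
        by_contra hne
        rw [hCmpEmpty i hθi hi j hj hne] at hPm
        exact hemptynotP i hi hPm
      refine ⟨hj, hne, ?_⟩
      intro k hk
      have hFmmem : (η ν k, r k) ∈ FmE ν i := (hFmE_elts ν hν i hi _).mpr ⟨k, hk, rfl, rfl⟩
      have hmem := hsub hFmmem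
      rw [hCmpRes i hθi hi j hj hne] at hmem
      exact (hfval_unique (hPg ν hν _ (hmselP ν hν j hne)) ⟨k, hk.trans hi, rfl⟩ hmem.1).symm
    · rintro ⟨hj, hne, hall⟩
      rw [hCmpRes i hθi hi j hj hne]
      refine ⟨hj, hPnode' ν hν i hi _ (hmselP ν hν j hne), ?_⟩
      intro p hp
      obtain ⟨k, hk, hp1, hp2⟩ := (hFmE_elts ν hν i hi p).mp hp
      have hkγ : k < gam.ord := hk.trans hi
      have hpe : p = (η ν k, fval (msel ν j) (η ν k)) := by
        refine Prod.ext hp1 ?_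
        rw [hp2, hp1, hall k hk]
      rw [hpe]
      exact ⟨(hvalPδ ν hν _ (hmselP ν hν j hne) k hkγ).2,
        ⟨k, hk.trans (StrongUnifAux.lt_add_one_ord i), rfl⟩⟩
  have hLINKval : ∀ i, θ ≤ i → i < gam.ord → (Vv i).Nonempty →
      F (η ν i) = fval (msel ν (sInf (Vv i))) (η ν i) := by
    intro i hθi hi hne
    have hvse : (VSE ν i).Nonempty := by rw [hVSEVv i hθi hi]; exact hne
    have h1 := (UNF ν hν i hi).1 hvse
    rw [hVSEVv i hθi hi] at h1
    have hjmmem : sInf (Vv i) ∈ Vv i := csInf_mem hne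
    have hDnejm : (Dset ν (sInf (Vv i))).Nonempty := hjmmem.2.1
    rw [hCmpRes i hθi hi _ hjmmem.1 hDnejm] at h1
    have hFGr := hFGrestrict (rgUpTo (η ν) (i + 1))
      (hPg ν hν _ (hmselP ν hν _ hDnejm)) (hrgsub ν hi)
    have hdomi : η ν i ∈ rgUpTo (η ν) (i + 1) := ⟨i, StrongUnifAux.lt_add_one_ord i, rfl⟩
    have hm := hfval_mem _ (η ν i) ((hFGr.2 _ hdomi).exists)
    have huq := hfval_unique (hPg ν hν _ (hmselP ν hν _ hDnejm)) ⟨i, hi, rfl⟩ hm.1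
    rw [h1]
    exact huq
  -- the chain of least valid indices is nonincreasing from `α₀` on
  have hchain : ∀ i, α₀ ≤ i → i < gam.ord → (Vv i).Nonempty ∧
      ∀ i', α₀ ≤ i' → i' ≤ i → sInf (Vv i) ≤ sInf (Vv i') := by
    intro i
    induction i using Ordinal.induction with
    | _ i IH =>
    intro hα₀i hi
    rcases eq_or_lt_of_le hα₀i with heq | hlt
    · subst heq
      constructor
      · refine ⟨α₀, StrongUnifAux.lt_add_one_ord α₀, hDneα₀, ?_⟩
        intro k hk
        exact ((hKeyD _).mp (hmsel ν α₀ hDneα₀)).2 k hk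
      · intro i' h1 h2
        have he : i' = α₀ := le_antisymm h2 h1
        rw [he]
    · rcases Ordinal.zero_or_succ_or_isSuccLimit i with hz | ⟨i0, hsu⟩ | hl
      · rw [hz] at hlt
        exact absurd hlt (by simp : ¬ α₀ < 0)
      · have hsu' : i = i0 + 1 := by rw [← hsu, Ordinal.add_one_eq_succ]
        have hi0i : i0 < i := by rw [hsu']; exact StrongUnifAux.lt_add_one_ord i0
        have hα₀i0 : α₀ ≤ i0 := StrongUnifAux.lt_add_one_iff_ord.mp (hsu' ▸ hlt)
        obtain ⟨hne0, hmono0⟩ := IH i0 hi0i hα₀i0 (hi0i.trans hi)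
        have hj0mem : sInf (Vv i0) ∈ Vv i0 := csInf_mem hne0
        have hθi0 : θ ≤ i0 := le_trans hθα₀.le hα₀i0
        have hval0 := hLINKval i0 hθi0 (hi0i.trans hi) hne0
        have hj0i : sInf (Vv i0) ∈ Vv i := by
          refine ⟨?_, hj0mem.2.1, ?_⟩
          · rw [hsu']
            exact hj0mem.1.trans (StrongUnifAux.lt_add_one_ord (i0 + 1))
          · intro k hk
            rw [hsu'] at hk
            rcases lt_or_eq_of_le (StrongUnifAux.lt_add_one_iff_ord.mp hk) with hk0 | hk0
            · exact hj0mem.2.2 k hk0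
            · rw [hk0]
              exact hval0.symm
        constructor
        · exact ⟨sInf (Vv i0), hj0i⟩
        · intro i' h1 h2
          rcases eq_or_lt_of_le h2 with h2e | h2l
          · rw [h2e]
          · have h2' : i' ≤ i0 := StrongUnifAux.lt_add_one_iff_ord.mp (hsu' ▸ h2l)
            exact le_trans (csInf_le' hj0i) (hmono0 i' h1 h2')
      · set W : Set Ordinal.{0} := {o | ∃ i', α₀ ≤ i' ∧ i' < i ∧ sInf (Vv i') = o} with hW
        have hWne : W.Nonempty := ⟨sInf (Vv α₀), α₀, le_rfl, hlt, rfl⟩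
        obtain ⟨i₁, hi₁α₀, hi₁i, hi₁inf⟩ := csInf_mem hWne
        have hstab : ∀ i', i₁ ≤ i' → i' < i → sInf (Vv i') = sInf W := by
          intro i' h1 h2
          have hle : sInf (Vv i') ≤ sInf W := by
            rw [← hi₁inf]
            exact (IH i' h2 (le_trans hi₁α₀ h1) (h2.trans hi)).2 i₁ hi₁α₀ h1
          exact le_antisymm hle (csInf_le' ⟨i', le_trans hi₁α₀ h1, h2, rfl⟩)
        have hjmem₁ : sInf W ∈ Vv i₁ := by
          rw [← hi₁inf]
          exact csInf_mem (IH i₁ hi₁i hi₁α₀ (hi₁i.trans hi)).1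
        have hjWi : sInf W ∈ Vv i := by
          refine ⟨?_, hjmem₁.2.1, ?_⟩
          · have h2 : i₁ + 1 < i := by rw [Ordinal.add_one_eq_succ]; exact hl.succ_lt hi₁i
            exact hjmem₁.1.trans (h2.trans (StrongUnifAux.lt_add_one_ord i))
          · intro k hk
            have hk1 : k + 1 < i := by rw [Ordinal.add_one_eq_succ]; exact hl.succ_lt hk
            have hi'i : max i₁ (k + 1) < i := max_lt hi₁i hk1
            have hmem' : sInf W ∈ Vv (max i₁ (k + 1)) := by
              rw [← hstab (max i₁ (k + 1)) (le_max_left _ _) hi'i]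
              exact csInf_mem
                (IH (max i₁ (k + 1)) hi'i (le_trans hi₁α₀ (le_max_left _ _)) (hi'i.trans hi)).1
            exact hmem'.2.2 k
              (lt_of_lt_of_le (StrongUnifAux.lt_add_one_ord k) (le_max_right i₁ (k + 1)))
        constructor
        · exact ⟨sInf W, hjWi⟩
        · intro i' h1 h2
          rcases eq_or_lt_of_le h2 with h2e | h2l
          · rw [h2e]
          · exact le_trans (csInf_le' hjWi) (csInf_le' ⟨i', h1, h2l, rfl⟩)
  -- global stabilization
  set W2 : Set Ordinal.{0} := {o | ∃ i', α₀ ≤ i' ∧ i' < gam.ord ∧ sInf (Vv i') = o} with hW2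
  have hW2ne : W2.Nonempty := ⟨sInf (Vv α₀), α₀, le_rfl, hα₀γ, rfl⟩
  obtain ⟨iD, hDα₀, hDγ, hDinf⟩ := csInf_mem hW2ne
  have hstab2 : ∀ i', iD ≤ i' → i' < gam.ord → sInf (Vv i') = sInf W2 := by
    intro i' h1 h2
    refine le_antisymm ?_ (csInf_le' ⟨i', le_trans hDα₀ h1, h2, rfl⟩)
    rw [← hDinf]
    exact (hchain i' (le_trans hDα₀ h1) h2).2 iD hDα₀ h1
  have hjDmem : ∀ i', iD ≤ i' → i' < gam.ord → sInf W2 ∈ Vv i' := by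
    intro i' h1 h2
    rw [← hstab2 i' h1 h2]
    exact csInf_mem (hchain i' (le_trans hDα₀ h1) h2).1
  have hDnejD : (Dset ν (sInf W2)).Nonempty := (hjDmem iD le_rfl hDγ).2.1
  have hfDP : msel ν (sInf W2) ∈ P ν := hmselP ν hν _ hDnejD
  have hfr : ∀ k, k < gam.ord → fval (msel ν (sInf W2)) (η ν k) = r k := by
    intro k hk
    have hi'γ : max iD (k + 1) < gam.ord := max_lt hDγ (hsucclt hk)
    have hmem := hjDmem (max iD (k + 1)) (le_max_left _ _) hi'γ
    exact hmem.2.2 k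
      (lt_of_lt_of_le (StrongUnifAux.lt_add_one_ord k) (le_max_right _ _))
  have hgraph : graphOf F (rgUpTo (η ν) gam.ord) = msel ν (sInf W2) := by
    ext p
    constructor
    · rintro ⟨⟨k, hk, hp1⟩, hp2⟩
      have hpe : p = (η ν k, fval (msel ν (sInf W2)) (η ν k)) := by
        refine Prod.ext hp1.symm ?_
        rw [hp2, ← hp1, hfr k hk]
      rw [hpe]
      exact (hvalPδ ν hν _ hfDP k hk).2
    · intro hp
      have hFG := hPg ν hν _ hfDP
      have hp1 := (hFG.1 p hp).1
      refine ⟨hp1, ?_⟩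
      obtain ⟨k, hk, hp1'⟩ := hp1
      have hpmem : (p.1, p.2) ∈ msel ν (sInf W2) := by rwa [Prod.mk.eta]
      have h2 : p.2 = fval (msel ν (sInf W2)) p.1 := hfval_unique hFG ⟨k, hk, hp1'⟩ hpmem
      rw [h2, ← hp1', hfr k hk]
  rw [hgraph]
  exact hfDP

end
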